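/- Let A be an m×n matrix over a field F, B an m'×n matrix, and C an m'×n' matrix. Let I ⊆ {1,...,n} be the set of indices of non-zero columns of B. If I is not a relation of A (i.e., there is no row vector y ∈ F^m with ∅ ≠ supp(yA) ⊆ I), then nul(A) − nul([[A,0],[B,C]]) = rank([B C]) − n', where nul denotes the nullity (dimension of the kernel) of the matrix acting on column vectors. -/

import Mathlib

open Matrix Submodule LinearMap Module
set_option synthInstance.maxHeartbeats 1000000
set_option maxHeartbeats 1000000

section AuxStmt0
variable {F : Type*} [Field F]

variable {F : Type*} [Field F]

lemma func_eq_dot {k : ℕ} (φ : (Fin k → F) →ₗ[F] F) (z : Fin k → F) :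
    φ z = z ⬝ᵥ fun i => φ (fun j => if i = j then 1 else 0) := by
  rw [LinearMap.pi_apply_eq_sum_univ]
  simp [dotProduct, smul_eq_mul]

lemma dual_key {m n : ℕ} (A : Matrix (Fin m) (Fin n) F) (w : Fin n → F)
    (hw : ∀ x ∈ LinearMap.ker A.mulVecLin, w ⬝ᵥ x = 0) :
    ∃ y : Fin m → F, Matrix.vecMul y A = w := by
  set g : (Fin n → F) →ₗ[F] F :=
    { toFun := fun x => w ⬝ᵥ x
      map_add' := fun a b => dotProduct_add w a b
      map_smul' := fun c a => by simp } with hg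
  have hle : LinearMap.ker A.mulVecLin ≤ LinearMap.ker g := fun x hx => hw x hx
  set g₀ := (LinearMap.ker A.mulVecLin).liftQ g hle with hg₀
  set e := A.mulVecLin.quotKerEquivRange with he
  set h₀ : LinearMap.range A.mulVecLin →ₗ[F] F := g₀ ∘ₗ e.symm.toLinearMap with hh₀
  obtain ⟨h, hh⟩ := LinearMap.exists_extend h₀
  have key : ∀ x, h (A *ᵥ x) = w ⬝ᵥ x := by
    intro x
    have h1 : h (A *ᵥ x) = h₀ ⟨A *ᵥ x, ⟨x, rfl⟩⟩ := by
      rw [← hh]; rfl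
    have h2 : (⟨A *ᵥ x, ⟨x, rfl⟩⟩ : LinearMap.range A.mulVecLin)
        = e (Submodule.Quotient.mk x) := by
      simp [he, LinearMap.quotKerEquivRange]
      rfl
    rw [h1, h2, hh₀]
    simp [hg₀, hg]
  set y : Fin m → F := fun i => h (fun j => if i = j then 1 else 0) with hy
  refine ⟨y, ?_⟩
  funext j
  have h3 := key (Pi.single j 1)
  rw [func_eq_dot h (A *ᵥ Pi.single j 1)] at h3
  have h4 : (A *ᵥ Pi.single j 1) ⬝ᵥ y = y ⬝ᵥ (A *ᵥ Pi.single j 1) := dotProduct_comm _ _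
  rw [h4, Matrix.dotProduct_mulVec] at h3
  simpa using h3


end AuxStmt0

/-- `I` is a relation of `A`: some linear combination `y` of the rows of `A`
has nonempty support contained in `I`. -/
def IsRelation {F : Type*} [Field F] {m n : Type*} [Fintype m]
    (A : Matrix m n F) (I : Set n) : Prop :=
  ∃ y : m → F, (Function.support (Matrix.vecMul y A)).Nonempty ∧
    Function.support (Matrix.vecMul y A) ⊆ I

/-- The nullity of a matrix: the dimension of its kernel acting on column vectors. -/
noncomputable def nullity {F : Type*} [Field F] {m n : Type*} [Fintype m] [Fintype n]
    (A : Matrix m n F) : ℕ :=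
  Module.finrank F (LinearMap.ker A.mulVecLin)

section AuxStmt1
variable {F : Type*} [Field F]

lemma key_sub {m n m' n' : ℕ} (A : Matrix (Fin m) (Fin n) F) (B : Matrix (Fin m') (Fin n) F)
    (C : Matrix (Fin m') (Fin n') F) (I : Set (Fin n)) (hI : I = {j | ∃ i, B i j ≠ 0})
    (hrel : ¬ IsRelation A I) :
    LinearMap.range B.mulVecLin ≤
      (LinearMap.ker A.mulVecLin).map B.mulVecLin ⊔ LinearMap.range C.mulVecLin := by
  rintro _ ⟨x, rfl⟩
  by_contra hmem
  obtain ⟨φ, hφx, hφbot⟩ := Submodule.exists_dual_map_eq_bot_of_notMem hmem inferInstance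
  set y' : Fin m' → F := fun i => φ (fun j => if i = j then 1 else 0) with hy'
  have hφ : ∀ z, φ z = z ⬝ᵥ y' := func_eq_dot φ
  set w := Matrix.vecMul y' B with hw
  have hdot : ∀ u, w ⬝ᵥ u = φ (B *ᵥ u) := by
    intro u
    rw [hφ]
    exact ((Matrix.dotProduct_mulVec y' B u).symm).trans (dotProduct_comm _ _)
  have hvanish : ∀ u ∈ LinearMap.ker A.mulVecLin, w ⬝ᵥ u = 0 := by
    intro u hu
    have h1 : B *ᵥ u ∈ (LinearMap.ker A.mulVecLin).map B.mulVecLin ⊔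
        LinearMap.range C.mulVecLin := Submodule.mem_sup_left (Submodule.mem_map_of_mem hu)
    have h2 : φ (B *ᵥ u) ∈ (((LinearMap.ker A.mulVecLin).map B.mulVecLin ⊔
        LinearMap.range C.mulVecLin)).map φ := Submodule.mem_map_of_mem h1
    rw [hφbot] at h2
    rw [hdot]
    simpa using h2
  obtain ⟨y, hy⟩ := dual_key A w hvanish
  apply hrel
  refine ⟨y, ?_, ?_⟩
  · rw [hy]
    rw [Function.support_nonempty_iff]
    intro h0
    apply hφx
    show φ (B *ᵥ x) = 0
    rw [← hdot, h0]
    simp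
  · rw [hy]
    intro j hj
    by_contra hjI
    apply hj
    have hB : ∀ i, B i j = 0 := by
      intro i
      by_contra hBij
      exact hjI (hI ▸ ⟨i, hBij⟩)
    simp only [hw, Matrix.vecMul, dotProduct]
    simp [hB]

end AuxStmt1

theorem stmt_0 {F : Type*} [Field F] {m n m' n' : ℕ}
    (A : Matrix (Fin m) (Fin n) F) (B : Matrix (Fin m') (Fin n) F)
    (C : Matrix (Fin m') (Fin n') F)
    (I : Set (Fin n)) (hI : I = {j | ∃ i, B i j ≠ 0})
    (hrel : ¬ IsRelation A I) :
    (nullity A : ℤ) - nullity (Matrix.fromBlocks A 0 B C)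
      = ((Matrix.fromCols B C).rank : ℤ) - n' := by
  classical
  set K := LinearMap.ker A.mulVecLin with hK
  set Q := LinearMap.range C.mulVecLin with hQ
  set T := LinearMap.range B.mulVecLin ⊔ Q with hT
  set ψ : K →ₗ[F] ((Fin m' → F) ⧸ Q) := Q.mkQ ∘ₗ B.mulVecLin ∘ₗ K.subtype with hψ
  -- e1 : rank-nullity for ψ
  have e1 : finrank F (LinearMap.range ψ) + finrank F (LinearMap.ker ψ) = nullity A :=
    LinearMap.finrank_range_add_finrank_ker ψ
  -- range of ψ
  have e2 : LinearMap.range ψ = Submodule.map Q.mkQ T := by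
    have h1 : LinearMap.range ψ = Submodule.map Q.mkQ (Submodule.map B.mulVecLin K) := by
      rw [hψ, LinearMap.range_comp, LinearMap.range_comp, Submodule.range_subtype]
    have h2 : Submodule.map B.mulVecLin K ⊔ Q = T := by
      refine le_antisymm (sup_le_sup_right (LinearMap.map_le_range) Q) ?_
      exact sup_le (le_trans (key_sub A B C I hI hrel) le_rfl) le_sup_right
    have h3 : Submodule.map Q.mkQ Q = ⊥ := by
      rw [eq_bot_iff]
      rintro _ ⟨z, hz, rfl⟩
      simpa using (Submodule.Quotient.mk_eq_zero Q).2 hz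
    rw [h1, ← h2, Submodule.map_sup, h3, sup_bot_eq]
  -- e3 : finrank of quotient image
  have e3 : finrank F (Submodule.map Q.mkQ T) + finrank F Q = finrank F T := by
    have hQT : Q ≤ T := le_sup_right
    have h4 := LinearMap.finrank_range_add_finrank_ker (Q.mkQ ∘ₗ T.subtype)
    have h5 : LinearMap.range (Q.mkQ ∘ₗ T.subtype) = Submodule.map Q.mkQ T := by
      rw [LinearMap.range_comp, Submodule.range_subtype]
    have h6 : LinearMap.ker (Q.mkQ ∘ₗ T.subtype) = Submodule.comap T.subtype Q := by
      rw [LinearMap.ker_comp, Submodule.ker_mkQ]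
    have h7 : finrank F (Submodule.comap T.subtype Q) = finrank F Q :=
      (Submodule.comapSubtypeEquivOfLe hQT).finrank_eq
    rw [h5, h6, h7] at h4
    exact h4
  -- e4 : rank of fromColumns
  have e4 : (Matrix.fromCols B C).rank = finrank F T := by
    have h9 : LinearMap.range (Matrix.fromCols B C).mulVecLin = T := by
      refine le_antisymm ?_ (sup_le ?_ ?_)
      · rintro _ ⟨v, rfl⟩
        rw [Matrix.mulVecLin_apply, ← Sum.elim_comp_inl_inr v,
          Matrix.fromCols_mulVec_sumElim]
        exact Submodule.add_mem_sup (LinearMap.mem_range_self _ _)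
          (LinearMap.mem_range_self _ _)
      · rintro _ ⟨x, rfl⟩
        exact ⟨Sum.elim x 0, by simp⟩
      · rintro _ ⟨z, rfl⟩
        exact ⟨Sum.elim 0 z, by simp⟩
    rw [Matrix.rank, h9]
  -- e5 : rank-nullity for C
  have e5 : finrank F Q + finrank F (LinearMap.ker C.mulVecLin) = n' := by
    have := LinearMap.finrank_range_add_finrank_ker C.mulVecLin
    rwa [Module.finrank_pi, Fintype.card_fin] at this
  -- e6 : nullity of the block matrix
  have e6 : nullity (Matrix.fromBlocks A 0 B C)
      = finrank F (LinearMap.ker C.mulVecLin) + finrank F (LinearMap.ker ψ) := by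
    have memker : ∀ v : (Fin n ⊕ Fin n') → F,
        v ∈ LinearMap.ker (Matrix.fromBlocks A 0 B C).mulVecLin ↔
        A *ᵥ (v ∘ Sum.inl) = 0 ∧ B *ᵥ (v ∘ Sum.inl) + C *ᵥ (v ∘ Sum.inr) = 0 := by
      intro v
      rw [LinearMap.mem_ker, Matrix.mulVecLin_apply, Matrix.fromBlocks_mulVec]
      simp only [Matrix.zero_mulVec, add_zero]
      constructor
      · intro h
        exact ⟨funext fun i => congrFun h (Sum.inl i), funext fun i => congrFun h (Sum.inr i)⟩
      · rintro ⟨h1, h2⟩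
        funext i
        cases i with
        | inl i => exact congrFun h1 i
        | inr i => exact congrFun h2 i
    set Φ : LinearMap.ker (Matrix.fromBlocks A 0 B C).mulVecLin →ₗ[F] K :=
      LinearMap.codRestrict K ((LinearMap.funLeft F F Sum.inl) ∘ₗ
        (LinearMap.ker (Matrix.fromBlocks A 0 B C).mulVecLin).subtype)
        (fun v => LinearMap.mem_ker.2 (by
          rw [Matrix.mulVecLin_apply]
          exact ((memker v.1).1 v.2).1)) with hΦ
    have f1 : finrank F (LinearMap.range Φ) + finrank F (LinearMap.ker Φ)
        = nullity (Matrix.fromBlocks A 0 B C) := LinearMap.finrank_range_add_finrank_ker Φ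
    have f2 : LinearMap.range Φ = LinearMap.ker ψ := by
      ext x
      constructor
      · rintro ⟨v, rfl⟩
        have h2 := ((memker v.1).1 v.2).2
        rw [LinearMap.mem_ker]
        show Q.mkQ (B *ᵥ (v.1 ∘ Sum.inl)) = 0
        rw [Submodule.mkQ_apply, Submodule.Quotient.mk_eq_zero]
        refine ⟨-(v.1 ∘ Sum.inr), ?_⟩
        rw [Matrix.mulVecLin_apply, Matrix.mulVec_neg]
        exact neg_eq_of_add_eq_zero_left h2
      · intro hx
        rw [LinearMap.mem_ker] at hx
        have hx' : Q.mkQ (B *ᵥ (x : Fin n → F)) = 0 := hx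
        rw [Submodule.mkQ_apply, Submodule.Quotient.mk_eq_zero] at hx'
        obtain ⟨z, hz⟩ := hx'
        rw [Matrix.mulVecLin_apply] at hz
        refine ⟨⟨Sum.elim (x : Fin n → F) (-z), ?_⟩, ?_⟩
        · rw [memker]
          constructor
          · have hxK : A *ᵥ (x : Fin n → F) = 0 := x.2
            simpa [Sum.elim_comp_inl] using hxK
          · rw [Sum.elim_comp_inl, Sum.elim_comp_inr, Matrix.mulVec_neg, hz]
            exact add_neg_cancel _
        · apply Subtype.ext
          show (Sum.elim (x : Fin n → F) (-z)) ∘ Sum.inl = (x : Fin n → F)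
          exact Sum.elim_comp_inl _ _
    have f3 : finrank F (LinearMap.ker Φ) = finrank F (LinearMap.ker C.mulVecLin) := by
      have hzero : ∀ u : LinearMap.ker Φ,
          (u.1.1 : (Fin n ⊕ Fin n') → F) ∘ Sum.inl = 0 := by
        intro u
        have hu := u.2
        rw [LinearMap.mem_ker] at hu
        exact congrArg Subtype.val hu
      set η : LinearMap.ker Φ →ₗ[F] LinearMap.ker C.mulVecLin :=
        LinearMap.codRestrict (LinearMap.ker C.mulVecLin)
          ((LinearMap.funLeft F F Sum.inr) ∘ₗ
            (LinearMap.ker (Matrix.fromBlocks A 0 B C).mulVecLin).subtype ∘ₗ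
            (LinearMap.ker Φ).subtype)
          (fun u => LinearMap.mem_ker.2 (by
            rw [Matrix.mulVecLin_apply]
            have h2 := ((memker u.1.1).1 u.1.2).2
            rw [hzero u] at h2
            exact (by simpa using h2 : C *ᵥ ((u.1.1 : (Fin n ⊕ Fin n') → F) ∘ Sum.inr) = 0))) with hη
      have hinj : Function.Injective η := by
        intro u u' huu
        have hval : (u.1.1 : (Fin n ⊕ Fin n') → F) ∘ Sum.inr
            = (u'.1.1 : (Fin n ⊕ Fin n') → F) ∘ Sum.inr :=
          congrArg Subtype.val huu
        apply Subtype.ext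
        apply Subtype.ext
        funext i
        cases i with
        | inl i =>
          have e1 : (u.1.1 : (Fin n ⊕ Fin n') → F) (Sum.inl i)
              = (u.1.1 ∘ Sum.inl) i := rfl
          have e2 : (u'.1.1 : (Fin n ⊕ Fin n') → F) (Sum.inl i)
              = (u'.1.1 ∘ Sum.inl) i := rfl
          rw [e1, e2, hzero u, hzero u']
        | inr i => exact congrFun hval i
      have hsurj : Function.Surjective η := by
        intro z
        have hvm : Sum.elim (0 : Fin n → F) (z : Fin n' → F)
            ∈ LinearMap.ker (Matrix.fromBlocks A 0 B C).mulVecLin := by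
          rw [memker]
          constructor
          · rw [Sum.elim_comp_inl]
            exact Matrix.mulVec_zero A
          · rw [Sum.elim_comp_inl, Sum.elim_comp_inr, Matrix.mulVec_zero]
            have hz : C *ᵥ (z : Fin n' → F) = 0 := z.2
            rw [hz, add_zero]
        have hΦ0 : (⟨Sum.elim 0 (z : Fin n' → F), hvm⟩ :
            LinearMap.ker (Matrix.fromBlocks A 0 B C).mulVecLin) ∈ LinearMap.ker Φ := by
          rw [LinearMap.mem_ker]
          apply Subtype.ext
          show Sum.elim (0 : Fin n → F) (z : Fin n' → F) ∘ Sum.inl = 0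
          exact Sum.elim_comp_inl _ _
        refine ⟨⟨⟨Sum.elim 0 (z : Fin n' → F), hvm⟩, hΦ0⟩, ?_⟩
        apply Subtype.ext
        show Sum.elim (0 : Fin n → F) (z : Fin n' → F) ∘ Sum.inr = (z : Fin n' → F)
        exact Sum.elim_comp_inr _ _
      exact (LinearEquiv.ofBijective η ⟨hinj, hsurj⟩).finrank_eq
    rw [f2, f3] at f1
    omega
  rw [← e1, e2, e6]
  rw [e4]
  push_cast
  omega
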